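/- arXiv:1808.01062 — 2 statements merged into one kernel-verified Lean document; each statement's English description precedes it below -/
import Mathlib

section
/- Let q ∈ (-1,1), q ≠ 0, and let f^{(q)}(x) = (√(1−q)/(2π))·√(4−(1−q)x²)·Σ_{k=1}^∞ (−1)^{k−1} q^{k(k−1)/2} T_{2k−2}(x√(1−q)/2) with partial sums f_J^{(q)} (first J−1 terms). Then for J ≥ 4, sup over |x| < 2/√(1−q) of |f^{(q)}(x) − f_J^{(q)}(x)| ≤ |q|^{(J−1)(J−2)/2}/(π(1−q²)²). -/
open Polynomial Real

/-- The q-Gaussian density (on its support), expanded in Chebyshev polynomials of the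
second kind: `f^{(q)}(x) = (√(1−q)/(2π))·√(4−(1−q)x²)·Σ_{k≥1} (−1)^{k−1} q^{C(k,2)}
T_{2k−2}(x√(1−q)/2)` (written with `k = j + 1`). -/
noncomputable def qGaussianDensity (q x : ℝ) : ℝ :=
  Real.sqrt (1 - q) / (2 * Real.pi) * Real.sqrt (4 - (1 - q) * x ^ 2) *
    ∑' j : ℕ, (-1 : ℝ) ^ j * q ^ (j * (j + 1) / 2) *
      (Polynomial.Chebyshev.U ℝ (2 * j : ℤ)).eval (x * Real.sqrt (1 - q) / 2)

/-- Truncation of the q-Gaussian density to the first `J − 1` terms of its Chebyshev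
expansion. -/
noncomputable def qGaussianDensityTrunc (q : ℝ) (J : ℕ) (x : ℝ) : ℝ :=
  Real.sqrt (1 - q) / (2 * Real.pi) * Real.sqrt (4 - (1 - q) * x ^ 2) *
    ∑ j ∈ Finset.range (J - 1), (-1 : ℝ) ^ j * q ^ (j * (j + 1) / 2) *
      (Polynomial.Chebyshev.U ℝ (2 * j : ℤ)).eval (x * Real.sqrt (1 - q) / 2)


lemma U_abs_mul_sqrt_le (n : ℤ) (y : ℝ) (hy : |y| ≤ 1) :
    |(Chebyshev.U ℝ n).eval y| * Real.sqrt (1 - y ^ 2) ≤ 1 := by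
  obtain ⟨h1, h2⟩ := abs_le.mp hy
  have hc : Real.cos (Real.arccos y) = y := Real.cos_arccos h1 h2
  have hs : Real.sin (Real.arccos y) = Real.sqrt (1 - y ^ 2) := by
    rw [Real.sin_arccos]
  have h := Chebyshev.U_real_cos (Real.arccos y) n
  rw [hc, hs] at h
  calc |(Chebyshev.U ℝ n).eval y| * Real.sqrt (1 - y ^ 2)
      = |(Chebyshev.U ℝ n).eval y * Real.sqrt (1 - y ^ 2)| := by
        rw [abs_mul, abs_of_nonneg (Real.sqrt_nonneg _)]
    _ = |Real.sin ((n + 1) * Real.arccos y)| := by rw [h]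
    _ ≤ 1 := Real.abs_sin_le_one _

lemma tri_exp_le (k i : ℕ) :
    (k + 3) * (k + 2) / 2 + 3 + i ≤ (i + (k + 3)) * ((i + (k + 3)) + 1) / 2 := by
  rw [Nat.le_div_iff_mul_le two_pos]
  have h2 : (k + 3) * (k + 2) / 2 * 2 = (k + 3) * (k + 2) := by
    rw [Nat.div_mul_cancel]
    simpa [mul_comm] using (Nat.even_mul_succ_self (k + 2)).two_dvd
  have : (k + 3) * (k + 2) + 6 + 2 * i ≤ (i + (k + 3)) * (i + (k + 3) + 1) := by nlinarith
  omega

lemma le_tri (j : ℕ) : j ≤ j * (j + 1) / 2 := by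
  rw [Nat.le_div_iff_mul_le two_pos]
  rcases j with _ | n
  · simp
  · exact Nat.mul_le_mul le_rfl (by omega)

lemma final_ineq (s t : ℝ) (hs : 0 ≤ s) (hs2 : s ^ 2 ≤ 1 + t) (ht : 0 ≤ t) (ht1 : t < 1) :
    s * t ^ 3 * (1 - t ^ 2) ^ 2 ≤ 1 - t := by
  have hs32 : s ≤ 3 / 2 := by nlinarith
  have h27 : t ^ 3 * (1 - t) ≤ 27 / 256 := by
    nlinarith [mul_nonneg (sq_nonneg (t - 3 / 4)) (sq_nonneg (t + 1 / 4)), sq_nonneg (t - 3 / 4)]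
  have hnn : 0 ≤ t ^ 3 * (1 - t) := mul_nonneg (pow_nonneg ht 3) (by linarith)
  have h4 : (1 + t) ^ 2 ≤ 4 := by nlinarith
  have key : s * (t ^ 3 * (1 - t)) * (1 + t) ^ 2 ≤ 1 := by
    calc s * (t ^ 3 * (1 - t)) * (1 + t) ^ 2 ≤ 3 / 2 * (27 / 256) * 4 := by
          apply mul_le_mul (mul_le_mul hs32 h27 hnn (by norm_num)) h4 (sq_nonneg _) (by norm_num)
      _ ≤ 1 := by norm_num
  nlinarith [mul_le_mul_of_nonneg_right key (by linarith : (0:ℝ) ≤ 1 - t)]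

set_option maxHeartbeats 2000000 in
theorem qGaussianDensity_trunc_error (q : ℝ) (hq : -1 < q) (hq' : q < 1) (hq0 : q ≠ 0)
    (J : ℕ) (hJ : 4 ≤ J) (x : ℝ) (hx : |x| < 2 / Real.sqrt (1 - q)) :
    |qGaussianDensity q x - qGaussianDensityTrunc q J x|
      ≤ |q| ^ ((J - 1) * (J - 2) / 2) / (Real.pi * (1 - q ^ 2) ^ 2) := by
  obtain ⟨K, rfl⟩ : ∃ K, J = K + 4 := ⟨J - 4, by omega⟩
  unfold qGaussianDensity qGaussianDensityTrunc
  have hJ1 : K + 4 - 1 = K + 3 := rfl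
  have hJ2 : K + 4 - 2 = K + 2 := rfl
  rw [hJ1, hJ2]
  set st := Real.sqrt (1 - q) with hst_def
  have hst : 0 < st := Real.sqrt_pos.2 (by linarith)
  have hst2 : st ^ 2 = 1 - q := Real.sq_sqrt (by linarith)
  set t := |q| with ht_def
  have ht0 : 0 ≤ t := abs_nonneg q
  have ht1 : t < 1 := abs_lt.2 ⟨hq, hq'⟩
  set m := K + 3 with hm_def
  set E := (K + 3) * (K + 2) / 2 with hE_def
  set y := x * st / 2 with hy_def
  have hyabs : |y| < 1 := by
    have hxs : |x| * st < 2 := (lt_div_iff₀ hst).1 hx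
    have hy' : |y| = |x| * st / 2 := by
      rw [hy_def, abs_div, abs_mul, abs_of_pos hst, abs_two]
    rw [hy']; linarith
  have hy2 : y ^ 2 < 1 := by
    rw [← sq_abs]; exact pow_lt_one₀ (abs_nonneg y) hyabs two_ne_zero
  set D := Real.sqrt (1 - y ^ 2) with hD_def
  have hD : 0 < D := Real.sqrt_pos.2 (by linarith)
  set a : ℕ → ℝ := fun j => (-1 : ℝ) ^ j * q ^ (j * (j + 1) / 2) *
      (Chebyshev.U ℝ (2 * j : ℤ)).eval y with ha_def
  have hUb : ∀ n : ℤ, |(Chebyshev.U ℝ n).eval y| ≤ 1 / D :=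
    fun n => (le_div_iff₀ hD).2 (U_abs_mul_sqrt_le n y hyabs.le)
  have habs : ∀ j : ℕ, |a j| ≤ 1 / D * t ^ (j * (j + 1) / 2) := by
    intro j
    have h1 : |a j| = t ^ (j * (j + 1) / 2) * |(Chebyshev.U ℝ (2 * j : ℤ)).eval y| := by
      rw [ha_def]; simp [abs_mul, abs_pow, ht_def]
    rw [h1, mul_comm (1 / D) _]
    exact mul_le_mul_of_nonneg_left (hUb _) (pow_nonneg ht0 _)
  have hgeo : Summable (fun j : ℕ => 1 / D * t ^ j) :=
    (summable_geometric_of_lt_one ht0 ht1).mul_left _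
  have hSa : Summable a := by
    apply Summable.of_norm_bounded hgeo
    intro j
    rw [Real.norm_eq_abs]
    refine (habs j).trans (mul_le_mul_of_nonneg_left ?_ (by positivity))
    exact pow_le_pow_of_le_one ht0 ht1.le (le_tri j)
  set c : ℝ := 1 / D * t ^ E * t ^ 3 with hc_def
  have hc0 : 0 ≤ c := by positivity
  have hterm : ∀ i : ℕ, |a (i + m)| ≤ c * t ^ i := by
    intro i
    refine (habs _).trans ?_
    have hexp : E + 3 + i ≤ (i + m) * ((i + m) + 1) / 2 := tri_exp_le K i
    calc 1 / D * t ^ ((i + m) * ((i + m) + 1) / 2)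
        ≤ 1 / D * t ^ (E + 3 + i) :=
          mul_le_mul_of_nonneg_left (pow_le_pow_of_le_one ht0 ht1.le hexp) (by positivity)
      _ = c * t ^ i := by rw [hc_def, pow_add, pow_add]; ring
  have hSb : Summable (fun i : ℕ => c * t ^ i) :=
    (summable_geometric_of_lt_one ht0 ht1).mul_left _
  have hSa' : Summable (fun i : ℕ => a (i + m)) := (summable_nat_add_iff m).2 hSa
  have htail : |∑' i : ℕ, a (i + m)| ≤ c * (1 - t)⁻¹ := by
    calc |∑' i : ℕ, a (i + m)| ≤ ∑' i : ℕ, |a (i + m)| := by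
          have habs' : Summable fun i : ℕ => ‖a (i + m)‖ := by
            simpa [Real.norm_eq_abs] using hSa'.abs
          simpa [Real.norm_eq_abs] using norm_tsum_le_tsum_norm habs'
      _ ≤ ∑' i : ℕ, c * t ^ i := Summable.tsum_le_tsum hterm hSa'.abs hSb
      _ = c * (1 - t)⁻¹ := by rw [tsum_mul_left, tsum_geometric_of_lt_one ht0 ht1]
  set C : ℝ := st / (2 * Real.pi) * Real.sqrt (4 - (1 - q) * x ^ 2) with hC_def
  have hsqrt4 : Real.sqrt (4 - (1 - q) * x ^ 2) = 2 * D := by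
    have h4 : 4 - (1 - q) * x ^ 2 = 2 ^ 2 * (1 - y ^ 2) := by
      rw [hy_def]
      have hyy : (x * st / 2) ^ 2 = x ^ 2 * st ^ 2 / 4 := by ring
      rw [hyy, hst2]; ring
    rw [h4, Real.sqrt_mul (by norm_num), Real.sqrt_sq (by norm_num), hD_def]
  have hC : C = st * D / Real.pi := by
    rw [hC_def, hsqrt4]; field_simp
  have hC0 : 0 ≤ C := by rw [hC]; positivity
  have hdiff : C * (∑' j : ℕ, a j) - C * ∑ j ∈ Finset.range m, a j
      = C * ∑' i : ℕ, a (i + m) := by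
    rw [← mul_sub]
    congr 1
    have h := hSa.sum_add_tsum_nat_add m
    linarith [h]
  have h1t : 0 < 1 - t := by linarith
  have hq2 : (0:ℝ) < 1 - q ^ 2 := by
    have : q ^ 2 < 1 := by rw [← sq_abs]; exact pow_lt_one₀ ht0 ht1 two_ne_zero
    linarith
  have hqt : q ^ 2 = t ^ 2 := (sq_abs q).symm
  have hst1t : st ^ 2 ≤ 1 + t := by
    rcases abs_cases q with h | h
    · rw [hst2, ht_def, h.1]; linarith
    · rw [hst2, ht_def, h.1]; linarith
  have main : st * t ^ 3 * (1 - t ^ 2) ^ 2 ≤ 1 - t := final_ineq st t hst.le hst1t ht0 ht1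
  calc |C * (∑' j : ℕ, a j) - C * ∑ j ∈ Finset.range m, a j|
      = C * |∑' i : ℕ, a (i + m)| := by rw [hdiff, abs_mul, abs_of_nonneg hC0]
    _ ≤ C * (c * (1 - t)⁻¹) := mul_le_mul_of_nonneg_left htail hC0
    _ = st * t ^ 3 / (1 - t) * t ^ E / Real.pi := by
        rw [hC, hc_def]
        field_simp
    _ ≤ 1 / (1 - q ^ 2) ^ 2 * t ^ E / Real.pi := by
        have hfrac : st * t ^ 3 / (1 - t) ≤ 1 / (1 - q ^ 2) ^ 2 := by
          rw [div_le_div_iff₀ h1t (by positivity), hqt, one_mul]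
          exact main
        gcongr
    _ = t ^ E / (Real.pi * (1 - q ^ 2) ^ 2) := by
        field_simp
end

section
/- Let μ be a probability measure and f, g ∈ L²(μ) with f ≥ 1 and g ≥ 1 μ-a.e. Define probability measures ν_f(dx) = f·μ(dx)/∫f dμ and ν_g(dx) = g·μ(dx)/∫g dμ. Then D_KL(ν_g‖ν_f) ≤ (1/∫f dμ)·∫(g − f)² dμ. -/
open MeasureTheory


private lemma log_le_half_sub_inv {x : ℝ} (hx : 1 ≤ x) : Real.log x ≤ (x - x⁻¹) / 2 := by
  have hx0 : (0:ℝ) < x := lt_of_lt_of_le one_pos hx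
  have h1 : Real.log x ≤ Real.sinh (Real.log x) :=
    Real.self_le_sinh_iff.mpr (Real.log_nonneg hx)
  have h2 : Real.sinh (Real.log x) = (x - x⁻¹) / 2 := by
    rw [Real.sinh_eq, Real.exp_log hx0, Real.exp_neg, Real.exp_log hx0]
  rw [h2] at h1; exact h1

/-- For `0 ≤ y`, `y - y²/2 ≤ log (1+y)`. -/
private lemma sub_sq_div_two_le_log {y : ℝ} (hy : 0 ≤ y) : y - y^2/2 ≤ Real.log (1+y) := by
  set m : ℝ → ℝ := fun z => Real.log (1+z) - z + z^2/2 with hm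
  have hder : ∀ z : ℝ, 0 < 1+z → HasDerivAt m (1/(1+z) - 1 + z) z := by
    intro z hz
    have h1 : HasDerivAt (fun w : ℝ => 1+w) 1 z := by
      simpa using (hasDerivAt_id z).const_add 1
    have h2 : HasDerivAt (fun w : ℝ => Real.log (1+w)) (1/(1+z)) z := by
      simpa using h1.log hz.ne'
    have h3 : HasDerivAt (fun w : ℝ => w^2/2) z z := by
      have := (hasDerivAt_pow 2 z).div_const 2
      simpa using this
    exact (h2.sub (hasDerivAt_id z)).add h3
  have mono : MonotoneOn m (Set.Ici (0:ℝ)) := by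
    apply monotoneOn_of_deriv_nonneg (convex_Ici 0)
    · intro z hz
      have hz' : (0:ℝ) < 1 + z := by
        have : (0:ℝ) ≤ z := hz
        linarith
      exact (hder z hz').continuousAt.continuousWithinAt
    · intro z hz
      rw [interior_Ici] at hz
      have hz' : (0:ℝ) < 1 + z := by
        have : (0:ℝ) < z := hz
        linarith
      exact (hder z hz').differentiableAt.differentiableWithinAt
    · intro z hz
      rw [interior_Ici] at hz
      have hz0 : (0:ℝ) < z := hz
      have hz' : (0:ℝ) < 1 + z := by linarith
      rw [(hder z hz').deriv]
      have e : (1/(1+z)) * (1+z) = 1 := by field_simp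
      nlinarith [sq_nonneg z, mul_pos (div_pos one_pos hz') hz']
  have h0 : m 0 ≤ m y := mono (Set.self_mem_Ici) hy hy
  have : m 0 = 0 := by simp [hm]
  rw [this] at h0
  simp only [hm] at h0
  linarith

private lemma psi_nonneg {a b : ℝ} (ha : 1 ≤ a) (hb : 1 ≤ b) :
    0 ≤ a * (Real.log a - Real.log b) - (a - b) := by
  have ha0 : (0:ℝ) < a := lt_of_lt_of_le one_pos ha
  have hb0 : (0:ℝ) < b := lt_of_lt_of_le one_pos hb
  have h := Real.one_sub_inv_le_log_of_pos (div_pos ha0 hb0)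
  rw [Real.log_div ha0.ne' hb0.ne', inv_div] at h
  have h2 := mul_le_mul_of_nonneg_left h ha0.le
  have e : a * (1 - b/a) = a - b := by field_simp
  nlinarith [h2, e]

private lemma psi_le_half {a b : ℝ} (ha : 1 ≤ a) (hb : 1 ≤ b) :
    a * (Real.log a - Real.log b) - (a - b) ≤ (a - b)^2 / 2 := by
  have ha0 : (0:ℝ) < a := lt_of_lt_of_le one_pos ha
  have hb0 : (0:ℝ) < b := lt_of_lt_of_le one_pos hb
  rcases le_total b a with hba | hab
  · have h := log_le_half_sub_inv (x := a/b) ((one_le_div hb0).mpr hba)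
    rw [Real.log_div ha0.ne' hb0.ne', inv_div] at h
    have h2 := mul_le_mul_of_nonneg_left h (by positivity : (0:ℝ) ≤ 2*a*b)
    have e : (2*a*b) * ((a/b - b/a)/2) = a^2 - b^2 := by field_simp
    rw [e] at h2
    -- h2 : 2*a*b*(log a - log b) ≤ a^2 - b^2
    nlinarith [h2, hb0, mul_nonneg (by linarith : (0:ℝ) ≤ b - 1) (sq_nonneg (a-b))]
  · have h := sub_sq_div_two_le_log (y := (b-a)/a) (div_nonneg (by linarith) ha0.le)
    have e1 : 1 + (b-a)/a = b/a := by field_simp; ring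
    rw [e1, Real.log_div hb0.ne' ha0.ne'] at h
    have h2 := mul_le_mul_of_nonneg_left h (by positivity : (0:ℝ) ≤ 2*a^2)
    have e2 : (2*a^2) * ((b-a)/a - ((b-a)/a)^2/2) = 2*a*(b-a) - (b-a)^2 := by
      field_simp
    rw [e2] at h2
    -- h2 : 2*a*(b-a) - (b-a)^2 ≤ 2*a^2*(log b - log a)
    nlinarith [h2, ha0, mul_nonneg (by linarith : (0:ℝ) ≤ a - 1) (sq_nonneg (b-a))]

private lemma psi_le_quad {a b t : ℝ} (ha : 1 ≤ a) (hb : 1 ≤ b) (ht : 0 ≤ t) :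
    2 * t * (a * (Real.log a - Real.log b) - (a - b)) ≤ (a - b)^2 + t^2 * a := by
  have ha0 : (0:ℝ) < a := lt_of_lt_of_le one_pos ha
  have hb0 : (0:ℝ) < b := lt_of_lt_of_le one_pos hb
  rcases le_total a b with hab | hba
  · have hlog : Real.log a ≤ Real.log b := Real.log_le_log ha0 hab
    have hp : 0 ≤ a * (Real.log b - Real.log a) :=
      mul_nonneg ha0.le (sub_nonneg.mpr hlog)
    have hψ : a * (Real.log a - Real.log b) - (a - b) ≤ b - a := by nlinarith [hp]
    have h2 := mul_le_mul_of_nonneg_left hψ (by linarith : (0:ℝ) ≤ 2*t)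
    nlinarith [h2, sq_nonneg (b - a - t), mul_nonneg (sq_nonneg t) (by linarith : (0:ℝ) ≤ a - 1)]
  · set sa := Real.sqrt a with hsa
    set sb := Real.sqrt b with hsb
    have hsa2 : sa^2 = a := Real.sq_sqrt ha0.le
    have hsb2 : sb^2 = b := Real.sq_sqrt hb0.le
    have hsa1 : 1 ≤ sa := by
      rw [show (1:ℝ) = Real.sqrt 1 by simp]; exact Real.sqrt_le_sqrt ha
    have hsb1 : 1 ≤ sb := by
      rw [show (1:ℝ) = Real.sqrt 1 by simp]; exact Real.sqrt_le_sqrt hb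
    have hsba : sb ≤ sa := Real.sqrt_le_sqrt hba
    have hsb0 : (0:ℝ) < sb := lt_of_lt_of_le one_pos hsb1
    have hsa0 : (0:ℝ) < sa := lt_of_lt_of_le one_pos hsa1
    have h := log_le_half_sub_inv (x := sa/sb) ((one_le_div hsb0).mpr hsba)
    rw [Real.log_div hsa0.ne' hsb0.ne', inv_div, hsa, hsb,
      Real.log_sqrt ha0.le, Real.log_sqrt hb0.le] at h
    -- h : log a / 2 - log b / 2 ≤ (sa/sb - sb/sa)/2
    have h2 := mul_le_mul_of_nonneg_left h (by positivity : (0:ℝ) ≤ 2*sa*sb)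
    have e : (2*sa*sb) * ((sa/sb - sb/sa)/2) = sa^2 - sb^2 := by
      rw [hsa, hsb]; field_simp
    rw [e] at h2
    have h3 : sa * sb * (Real.log a - Real.log b) ≤ a - b := by
      nlinarith [h2, hsa2, hsb2]
    have h4 := mul_le_mul_of_nonneg_left h3 hsa0.le
    have e4 : sa * (sa * sb * (Real.log a - Real.log b))
        = a * (sb * (Real.log a - Real.log b)) := by rw [← hsa2]; ring
    rw [e4] at h4
    have hlog : Real.log b ≤ Real.log a := Real.log_le_log hb0 hba
    have hp : 0 ≤ a * (Real.log a - Real.log b) :=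
      mul_nonneg ha0.le (sub_nonneg.mpr hlog)
    have h5 : a * (Real.log a - Real.log b) ≤ sa * (a - b) := by
      nlinarith [h4, mul_nonneg (sub_nonneg.mpr hsb1) hp]
    have hψ : a * (Real.log a - Real.log b) - (a - b) ≤ sa * (a - b) := by
      nlinarith [h5, sub_nonneg.mpr hba]
    have h6 := mul_le_mul_of_nonneg_left hψ (by linarith : (0:ℝ) ≤ 2*t)
    nlinarith [h6, sq_nonneg (a - b - t*sa), hsa2, mul_nonneg ht (sub_nonneg.mpr hba)]


/-- For likelihoods `f, g ≥ 1` in `L²(μ)`, the KL divergence between the normalized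
posteriors `ν_g = g·μ/∫g` and `ν_f = f·μ/∫f` (written in density form) is bounded by
`(1/∫f dμ)·∫(g − f)² dμ`. -/
theorem klDiv_normalized_le {α : Type*} [MeasurableSpace α]
    (μ : Measure α) [IsProbabilityMeasure μ]
    (f g : α → ℝ) (hf : Measurable f) (hg : Measurable g)
    (hf1 : ∀ᵐ x ∂μ, 1 ≤ f x) (hg1 : ∀ᵐ x ∂μ, 1 ≤ g x)
    (hfi : Integrable f μ) (hgi : Integrable g μ)
    (hdiff : Integrable (fun x => (g x - f x) ^ 2) μ)
    (hkl : Integrable (fun x =>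
      (g x / ∫ y, g y ∂μ) * Real.log ((g x / ∫ y, g y ∂μ) / (f x / ∫ y, f y ∂μ))) μ) :
    ∫ x, (g x / ∫ y, g y ∂μ) * Real.log ((g x / ∫ y, g y ∂μ) / (f x / ∫ y, f y ∂μ)) ∂μ
      ≤ (1 / ∫ y, f y ∂μ) * ∫ x, (g x - f x) ^ 2 ∂μ := by
  set F := ∫ y, f y ∂μ with hFdef
  set G := ∫ y, g y ∂μ with hGdef
  have hF1 : 1 ≤ F := by
    rw [hFdef]
    calc (1:ℝ) = ∫ _, (1:ℝ) ∂μ := by simp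
    _ ≤ ∫ y, f y ∂μ := integral_mono_ae (integrable_const 1) hfi hf1
  have hG1 : 1 ≤ G := by
    rw [hGdef]
    calc (1:ℝ) = ∫ _, (1:ℝ) ∂μ := by simp
    _ ≤ ∫ y, g y ∂μ := integral_mono_ae (integrable_const 1) hgi hg1
  have hF0 : (0:ℝ) < F := lt_of_lt_of_le one_pos hF1
  have hG0 : (0:ℝ) < G := lt_of_lt_of_le one_pos hG1
  set D := ∫ x, (g x - f x)^2 ∂μ with hDdef
  have hD0 : 0 ≤ D := by rw [hDdef]; exact integral_nonneg fun x => sq_nonneg _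
  set ψ : α → ℝ := fun x => g x * (Real.log (g x) - Real.log (f x)) - (g x - f x)
    with hψdef
  have hψmeas : AEStronglyMeasurable ψ μ :=
    ((hg.mul ((Real.measurable_log.comp hg).sub (Real.measurable_log.comp hf))).sub
      (hg.sub hf)).aestronglyMeasurable
  have hψ_half : ∀ᵐ x ∂μ, ψ x ≤ (g x - f x)^2 / 2 := by
    filter_upwards [hf1, hg1] with x h1 h2
    exact psi_le_half h2 h1
  have hψ_0 : ∀ᵐ x ∂μ, 0 ≤ ψ x := by
    filter_upwards [hf1, hg1] with x h1 h2
    exact psi_nonneg h2 h1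
  have hψint : Integrable ψ μ := by
    refine Integrable.mono' (hdiff.div_const 2) hψmeas ?_
    filter_upwards [hψ_half, hψ_0] with x h1 h0
    rw [Real.norm_eq_abs, abs_of_nonneg h0]; exact h1
  set Φ := ∫ x, ψ x ∂μ with hΦdef
  have hΦ0 : 0 ≤ Φ := integral_nonneg_of_ae hψ_0
  have hΦhalf : Φ ≤ D / 2 := by
    have h := integral_mono_ae hψint (hdiff.div_const 2) hψ_half
    rwa [integral_div] at h
  set c1 := Real.log F - Real.log G with hc1def
  have hKL : ∫ x, (g x / G) * Real.log ((g x / G) / (f x / F)) ∂μ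
      = (1/G) * Φ + ((1/G) * (G - F) + (c1/G) * G) := by
    have hae : (fun x => (g x / G) * Real.log ((g x / G) / (f x / F))) =ᵐ[μ]
        (fun x => (1/G) * ψ x + ((1/G) * (g x - f x) + (c1/G) * g x)) := by
      filter_upwards [hf1, hg1] with x h1 h2
      have hfx : (0:ℝ) < f x := lt_of_lt_of_le one_pos h1
      have hgx : (0:ℝ) < g x := lt_of_lt_of_le one_pos h2
      have e1 : g x / G ≠ 0 := by positivity
      have e2 : f x / F ≠ 0 := by positivity
      rw [Real.log_div e1 e2, Real.log_div hgx.ne' hG0.ne', Real.log_div hfx.ne' hF0.ne']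
      simp only [hψdef, hc1def]
      ring
    have i1 : Integrable (fun x => 1/G * ψ x) μ := hψint.const_mul _
    have i2 : Integrable (fun x => 1/G * (g x - f x)) μ := (hgi.sub hfi).const_mul _
    have i3 : Integrable (fun x => c1/G * g x) μ := hgi.const_mul _
    have i23 : Integrable (fun x => 1/G * (g x - f x) + c1/G * g x) μ := i2.add i3
    rw [integral_congr_ae hae, integral_add i1 i23, integral_add i2 i3,
      integral_const_mul, integral_const_mul, integral_const_mul, integral_sub hgi hfi]
  rw [hKL]
  have hlog1 : c1 ≤ F/G - 1 := by
    have h := Real.log_le_sub_one_of_pos (div_pos hF0 hG0)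
    rwa [Real.log_div hF0.ne' hG0.ne'] at h
  have key : F * Φ + F * (G - F) + F * G * c1 ≤ G * D := by
    rcases le_or_gt F (2*G) with hc | hc
    · have h2 := mul_le_mul_of_nonneg_left hlog1 (by positivity : (0:ℝ) ≤ F*G)
      have e : F * G * (F/G - 1) = F^2 - F*G := by field_simp
      rw [e] at h2
      have h3 : F * Φ ≤ F * (D/2) := mul_le_mul_of_nonneg_left hΦhalf hF0.le
      have h4 : F * D ≤ 2*G*D := mul_le_mul_of_nonneg_right hc hD0
      nlinarith [h2, h3, h4]
    · have hGF : G < F := by linarith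
      set t0 := (F - G)/G with ht0def
      have ht0 : 0 ≤ t0 := div_nonneg (by linarith) hG0.le
      have hquad_ae : ∀ᵐ x ∂μ, 2*t0*ψ x ≤ (g x - f x)^2 + t0^2 * g x := by
        filter_upwards [hf1, hg1] with x h1 h2
        exact psi_le_quad h2 h1 ht0
      have hquad : 2*t0*Φ ≤ D + t0^2 * G := by
        have i1 : Integrable (fun x => 2*t0*ψ x) μ := hψint.const_mul _
        have i3 : Integrable (fun x => t0^2 * g x) μ := hgi.const_mul _
        have i4 : Integrable (fun x => (g x - f x)^2 + t0^2 * g x) μ := hdiff.add i3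
        have h := integral_mono_ae i1 i4 hquad_ae
        rwa [integral_const_mul, integral_add hdiff i3, integral_const_mul] at h
      have hA : 2*(F-G)*Φ ≤ G*D + (F-G)^2 := by
        have h2 := mul_le_mul_of_nonneg_left hquad hG0.le
        have e1 : G*(2*t0*Φ) = 2*(F-G)*Φ := by rw [ht0def]; field_simp
        have e2 : G*(D + t0^2*G) = G*D + (F-G)^2 := by rw [ht0def]; field_simp
        rw [e1, e2] at h2; exact h2
      have hL1 : 2*(F*G)*c1 ≤ F^2 - G^2 := by
        have h := log_le_half_sub_inv (x := F/G) ((one_le_div hG0).mpr hGF.le)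
        rw [Real.log_div hF0.ne' hG0.ne', inv_div] at h
        have h2 := mul_le_mul_of_nonneg_left h (by positivity : (0:ℝ) ≤ 2*(F*G))
        have e : 2*(F*G)*((F/G - G/F)/2) = F^2 - G^2 := by field_simp
        rw [e] at h2; exact h2
      have hB : G*Φ ≤ G*(D/2) := mul_le_mul_of_nonneg_left hΦhalf hG0.le
      nlinarith [hA, hL1, hB]
  have e : (1/G)*Φ + ((1/G)*(G - F) + (c1/G)*G)
      = (F*Φ + F*(G-F) + F*G*c1)/(F*G) := by field_simp; ring
  have e2 : 1/F*D = (G*D)/(F*G) := by field_simp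
  rw [e, e2]
  gcongr
end
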